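/- Let c > 0 be a constant such that c·∫₀^∞|u|² ≤ ∫₀^∞|u'|² + ∫₀^∞ x^β|u|² for every continuously differentiable u : [0,∞) → ℂ with u, u' square-integrable. Then there exists C > 0 such that for every η ∈ ℂ with |η| ≤ c/2 and every twice continuously differentiable F : [0,∞) → ℂ with F, F', F'' square-integrable on (0,∞), F'(0) = 1, and −F''(x) + i x^β F(x) − η F(x) = 0 for all x ≥ 0, one has 1/C ≤ |F(0)| ≤ C. -/

import Mathlib

open MeasureTheory Set

set_option maxHeartbeats 1000000

open MeasureTheory Set Filter Complex Topology

lemma aux_limit_zero {g : ℝ → ℂ} {L : ℂ} (hgi : IntegrableOn g (Ioi (0:ℝ)))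
    (h : Tendsto g atTop (𝓝 L)) : L = 0 := by
  by_contra hL
  have hε : 0 < ‖L‖ := norm_pos_iff.2 hL
  have hev : ∀ᶠ x in atTop, ‖L‖ / 2 < ‖g x‖ :=
    h.norm.eventually (eventually_gt_nhds (by linarith))
  obtain ⟨T, hT⟩ := eventually_atTop.1 hev
  set T' := max T 0 with hT'
  have hgi' : IntegrableOn g (Ioi T') :=
    hgi.mono_set (Ioi_subset_Ioi (le_max_right T 0))
  have hconst : Integrable (fun _ : ℝ => (‖L‖ / 2 : ℝ)) (volume.restrict (Ioi T')) := by
    refine Integrable.mono hgi'.norm aestronglyMeasurable_const ?_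
    refine (ae_restrict_iff' measurableSet_Ioi).2 (ae_of_all _ fun x hx => ?_)
    have hx' : T ≤ x := le_of_lt (lt_of_le_of_lt (le_max_left T 0) hx)
    have := (hT x hx').le
    simpa [_root_.abs_of_nonneg (by positivity : (0:ℝ) ≤ ‖L‖ / 2)] using this
  rcases integrable_const_iff.1 hconst with h0 | hfin
  · exact absurd h0 (by positivity)
  · have hfin := hfin.measure_univ_lt_top
    rw [Measure.restrict_apply_univ, Real.volume_Ioi] at hfin
    exact absurd hfin (by simp)

lemma aux_integral_deriv (g g' : ℝ → ℂ)
    (hg : ∀ x ∈ Ici (0:ℝ), HasDerivWithinAt g (g' x) (Ici 0) x)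
    (hgi : IntegrableOn g (Ioi 0))
    (hg'i : IntegrableOn g' (Ioi 0)) :
    ∫ x in Ioi (0:ℝ), g' x = - g 0 := by
  have hcont : ContinuousOn g (Ici 0) := fun x hx => (hg x hx).continuousWithinAt
  have hftc : ∀ T : ℝ, 0 ≤ T → ∫ x in (0:ℝ)..T, g' x = g T - g 0 := by
    intro T hT
    refine intervalIntegral.integral_eq_sub_of_hasDeriv_right_of_le hT
      (hcont.mono Icc_subset_Ici_self)
      (fun x hx => (hg x (le_of_lt hx.1)).mono (fun y hy => le_of_lt (hx.1.trans hy)))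
      ?_
    rw [intervalIntegrable_iff_integrableOn_Ioc_of_le hT]
    exact hg'i.mono_set Ioc_subset_Ioi_self
  have h1 : Tendsto (fun T => ∫ x in (0:ℝ)..T, g' x) atTop
      (𝓝 (∫ x in Ioi (0:ℝ), g' x)) :=
    intervalIntegral_tendsto_integral_Ioi 0 hg'i tendsto_id
  have h2 : Tendsto g atTop (𝓝 (g 0 + ∫ x in Ioi (0:ℝ), g' x)) := by
    refine (tendsto_const_nhds.add h1).congr' ?_
    filter_upwards [eventually_ge_atTop (0:ℝ)] with T hT
    rw [hftc T hT]; ring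
  have h3 := aux_limit_zero hgi h2
  have h4 : g 0 + ∫ x in Ioi (0:ℝ), g' x = 0 := h3
  linear_combination h4

lemma aux_mul_conj_integrable {f g : ℝ → ℂ} {s : Set ℝ}
    (hfm : AEStronglyMeasurable f (volume.restrict s))
    (hgm : AEStronglyMeasurable g (volume.restrict s))
    (hfi : IntegrableOn (fun x => ‖f x‖ ^ 2) s)
    (hgi : IntegrableOn (fun x => ‖g x‖ ^ 2) s) :
    IntegrableOn (fun x => f x * (starRingEnd ℂ) (g x)) s := by
  have hgm' : AEStronglyMeasurable (fun x => (starRingEnd ℂ) (g x)) (volume.restrict s) :=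
    Complex.continuous_conj.comp_aestronglyMeasurable hgm
  refine Integrable.mono' (g := fun x => (‖f x‖ ^ 2 + ‖g x‖ ^ 2) / 2)
    (((hfi.add hgi).div_const 2).congr (ae_of_all _ fun x => by simp)) (hfm.mul hgm') ?_
  refine ae_of_all _ fun x => ?_
  have h1 : ‖f x * (starRingEnd ℂ) (g x)‖ = ‖f x‖ * ‖g x‖ := by
    rw [norm_mul, RCLike.norm_conj]
  rw [h1]
  nlinarith [sq_nonneg (‖f x‖ - ‖g x‖), norm_nonneg (f x), norm_nonneg (g x)]

/-- Uniform bounds on the Dirichlet data: there is `C > 0` such that for every `|η| ≤ c/2`,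
any normalized (`F'(0)=1`) square-integrable solution of `-F'' + i x^β F - η F = 0`
satisfies `1/C ≤ |F(0)| ≤ C`. -/
theorem stmt_5 (β : ℝ) (hβ : 0 ≤ β) (c : ℝ) (hc : 0 < c)
    (hspec : ∀ u u' : ℝ → ℂ,
        (∀ x ∈ Ici (0:ℝ), HasDerivWithinAt u (u' x) (Ici 0) x) →
        ContinuousOn u' (Ici 0) →
        IntegrableOn (fun x => ‖u x‖ ^ 2) (Ioi 0) →
        IntegrableOn (fun x => ‖u' x‖ ^ 2) (Ioi 0) →
        ENNReal.ofReal c * (∫⁻ x in Ioi (0:ℝ), ENNReal.ofReal (‖u x‖ ^ 2)) ≤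
          (∫⁻ x in Ioi (0:ℝ), ENNReal.ofReal (‖u' x‖ ^ 2)) +
            ∫⁻ x in Ioi (0:ℝ), ENNReal.ofReal (x ^ β * ‖u x‖ ^ 2)) :
    ∃ C : ℝ, 0 < C ∧
      ∀ η : ℂ, ‖η‖ ≤ c / 2 →
        ∀ F F' F'' : ℝ → ℂ,
          (∀ x ∈ Ici (0:ℝ), HasDerivWithinAt F (F' x) (Ici 0) x) →
          (∀ x ∈ Ici (0:ℝ), HasDerivWithinAt F' (F'' x) (Ici 0) x) →
          ContinuousOn F'' (Ici 0) →
          IntegrableOn (fun x => ‖F x‖ ^ 2) (Ioi 0) →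
          IntegrableOn (fun x => ‖F' x‖ ^ 2) (Ioi 0) →
          IntegrableOn (fun x => ‖F'' x‖ ^ 2) (Ioi 0) →
          F' 0 = 1 →
          (∀ x : ℝ, 0 ≤ x →
            -F'' x + Complex.I * ((x ^ β : ℝ) : ℂ) * F x - η * F x = 0) →
          1 / C ≤ ‖F 0‖ ∧ ‖F 0‖ ≤ C := by
  set a : ℝ := 1 + c / 2 with ha
  have ha1 : 1 ≤ a := by rw [ha]; linarith
  have ha0 : 0 < a := lt_of_lt_of_le one_pos ha1
  set δ : ℝ := min (1 / (8 * a)) (c / (2 * a)) with hδdef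
  have hδ : 0 < δ := lt_min (by positivity) (by positivity)
  set K : ℝ := 5 * (1 + 1 / c) with hK
  have hK0 : 0 < K := by positivity
  clear_value K δ a
  refine ⟨max K (5 / δ), lt_of_lt_of_le hK0 (le_max_left _ _), ?_⟩
  intro η hη F F' F'' hFd hF'd hF''c hFi hF'i hF''i hF'0 heq
  -- basic regularity
  have hFc : ContinuousOn F (Ici 0) := fun x hx => (hFd x hx).continuousWithinAt
  have hF'c : ContinuousOn F' (Ici 0) := fun x hx => (hF'd x hx).continuousWithinAt
  have hFm : AEStronglyMeasurable F (volume.restrict (Ioi 0)) :=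
    (hFc.mono Ioi_subset_Ici_self).aestronglyMeasurable measurableSet_Ioi
  have hF'm : AEStronglyMeasurable F' (volume.restrict (Ioi 0)) :=
    (hF'c.mono Ioi_subset_Ici_self).aestronglyMeasurable measurableSet_Ioi
  have hF''m : AEStronglyMeasurable F'' (volume.restrict (Ioi 0)) :=
    (hF''c.mono Ioi_subset_Ici_self).aestronglyMeasurable measurableSet_Ioi
  have hF''eq : ∀ x : ℝ, 0 ≤ x → F'' x = Complex.I * ((x ^ β : ℝ) : ℂ) * F x - η * F x := by
    intro x hx
    linear_combination (-1 : ℂ) * heq x hx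
  have hF''norm : ∀ x : ℝ, 0 ≤ x → ‖F'' x‖ ≤ (x ^ β + c / 2) * ‖F x‖ := by
    intro x hx
    rw [hF''eq x hx]
    calc ‖Complex.I * ((x ^ β : ℝ) : ℂ) * F x - η * F x‖
        ≤ ‖Complex.I * ((x ^ β : ℝ) : ℂ) * F x‖ + ‖η * F x‖ := norm_sub_le _ _
      _ ≤ x ^ β * ‖F x‖ + c / 2 * ‖F x‖ := by
          rw [norm_mul, norm_mul, norm_mul, Complex.norm_I, one_mul, Complex.norm_real,
            Real.norm_eq_abs, _root_.abs_of_nonneg (Real.rpow_nonneg hx β)]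
          have h7 : ‖η‖ * ‖F x‖ ≤ c / 2 * ‖F x‖ :=
            mul_le_mul_of_nonneg_right hη (norm_nonneg _)
          linarith
      _ = (x ^ β + c / 2) * ‖F x‖ := by ring
  -- the three basic integrals
  set P : ℝ := ∫ x in Ioi (0:ℝ), ‖F' x‖ ^ 2 with hPdef
  set R : ℝ := ∫ x in Ioi (0:ℝ), ‖F x‖ ^ 2 with hRdef
  set Q : ℝ := ∫ x in Ioi (0:ℝ), x ^ β * ‖F x‖ ^ 2 with hQdef
  have hP0 : 0 ≤ P := setIntegral_nonneg measurableSet_Ioi fun x _ => sq_nonneg _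
  have hR0 : 0 ≤ R := setIntegral_nonneg measurableSet_Ioi fun x _ => sq_nonneg _
  have hQ0 : 0 ≤ Q := setIntegral_nonneg measurableSet_Ioi fun x hx =>
    mul_nonneg (Real.rpow_nonneg (le_of_lt hx) β) (sq_nonneg _)
  -- integrability of x^β ‖F‖²
  have hrpow_bd : ∀ x : ℝ, 0 ≤ x → x ^ β * ‖F x‖ ≤ ‖F'' x‖ + c / 2 * ‖F x‖ := by
    intro x hx
    have h2 : ((x ^ β : ℝ) : ℂ) * F x = -Complex.I * (F'' x + η * F x) := by
      rw [hF''eq x hx]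
      have hII : Complex.I * Complex.I = -1 := Complex.I_mul_I
      linear_combination (((x ^ β : ℝ) : ℂ) * F x) * hII
    have h3 : x ^ β * ‖F x‖ = ‖((x ^ β : ℝ) : ℂ) * F x‖ := by
      rw [norm_mul, Complex.norm_real, Real.norm_eq_abs,
        _root_.abs_of_nonneg (Real.rpow_nonneg hx β)]
    rw [h3, h2]
    calc ‖-Complex.I * (F'' x + η * F x)‖ = ‖F'' x + η * F x‖ := by
          rw [norm_mul]; simp
      _ ≤ ‖F'' x‖ + ‖η‖ * ‖F x‖ := by
          have := norm_add_le (F'' x) (η * F x)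
          rw [norm_mul] at this
          exact this
      _ ≤ ‖F'' x‖ + c / 2 * ‖F x‖ := by
          have h7 : ‖η‖ * ‖F x‖ ≤ c / 2 * ‖F x‖ :=
            mul_le_mul_of_nonneg_right hη (norm_nonneg _)
          linarith
  have hQi : IntegrableOn (fun x => x ^ β * ‖F x‖ ^ 2) (Ioi 0) := by
    have hmaj : IntegrableOn
        (fun x => (‖F'' x‖ ^ 2 + ‖F x‖ ^ 2) / 2 + c / 2 * ‖F x‖ ^ 2) (Ioi 0) := by
      exact ((hF''i.add hFi).div_const 2).add (hFi.const_mul (c / 2))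
    have hmeas : AEStronglyMeasurable (fun x => x ^ β * ‖F x‖ ^ 2)
        (volume.restrict (Ioi 0)) := by
      have h1 : ContinuousOn (fun x : ℝ => x ^ β * ‖F x‖ ^ 2) (Ioi 0) := by
        refine ContinuousOn.mul ?_ (((hFc.mono Ioi_subset_Ici_self).norm).pow 2)
        exact fun x hx => (Real.continuousAt_rpow_const x β (Or.inl (ne_of_gt hx))).continuousWithinAt
      exact h1.aestronglyMeasurable measurableSet_Ioi
    refine Integrable.mono' hmaj hmeas ?_
    refine (ae_restrict_iff' measurableSet_Ioi).2 (ae_of_all _ fun x hx => ?_)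
    have hx0 : (0:ℝ) ≤ x := le_of_lt hx
    have hb := hrpow_bd x hx0
    have hnn : 0 ≤ x ^ β * ‖F x‖ ^ 2 :=
      mul_nonneg (Real.rpow_nonneg hx0 β) (sq_nonneg _)
    rw [Real.norm_eq_abs, _root_.abs_of_nonneg hnn]
    have hF0 : (0:ℝ) ≤ ‖F x‖ := norm_nonneg _
    nlinarith [sq_nonneg (‖F'' x‖ - ‖F x‖), norm_nonneg (F'' x)]
  -- spectral inequality in real form : c R ≤ P + Q
  have hcR : c * R ≤ P + Q := by
    have h1 := hspec F F' hFd hF'c hFi hF'i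
    rw [← ofReal_integral_eq_lintegral_ofReal hFi (ae_of_all _ fun x => sq_nonneg _),
      ← ofReal_integral_eq_lintegral_ofReal hF'i (ae_of_all _ fun x => sq_nonneg _),
      ← ofReal_integral_eq_lintegral_ofReal hQi
        ((ae_restrict_iff' measurableSet_Ioi).2 (ae_of_all _ fun x hx =>
          mul_nonneg (Real.rpow_nonneg (le_of_lt hx) β) (sq_nonneg _))),
      ← ENNReal.ofReal_mul (le_of_lt hc), ← ENNReal.ofReal_add hP0 hQ0] at h1
    exact (ENNReal.ofReal_le_ofReal_iff (by positivity)).1 h1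
  -- main identity
  have hg1d : ∀ x ∈ Ici (0:ℝ),
      HasDerivWithinAt (fun y => F' y * (starRingEnd ℂ) (F y))
        (F'' x * (starRingEnd ℂ) (F x) + F' x * (starRingEnd ℂ) (F' x)) (Ici 0) x :=
    fun x hx => (hF'd x hx).mul ((hFd x hx).star)
  have hg1i : IntegrableOn (fun x => F' x * (starRingEnd ℂ) (F x)) (Ioi 0) :=
    aux_mul_conj_integrable hF'm hFm hF'i hFi
  have hg1'i : IntegrableOn
      (fun x => F'' x * (starRingEnd ℂ) (F x) + F' x * (starRingEnd ℂ) (F' x)) (Ioi 0) :=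
    (aux_mul_conj_integrable hF''m hFm hF''i hFi).add
      (aux_mul_conj_integrable hF'm hF'm hF'i hF'i)
  have I1 : ∫ x in Ioi (0:ℝ),
      (F'' x * (starRingEnd ℂ) (F x) + F' x * (starRingEnd ℂ) (F' x))
      = -(F' 0 * (starRingEnd ℂ) (F 0)) :=
    aux_integral_deriv _ _ hg1d hg1i hg1'i
  have hsplit : ∫ x in Ioi (0:ℝ),
      (F'' x * (starRingEnd ℂ) (F x) + F' x * (starRingEnd ℂ) (F' x))
      = Complex.I * (Q : ℂ) - η * (R : ℂ) + (P : ℂ) := by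
    have heqfun : EqOn
        (fun x => F'' x * (starRingEnd ℂ) (F x) + F' x * (starRingEnd ℂ) (F' x))
        (fun x => Complex.I * ((x ^ β * ‖F x‖ ^ 2 : ℝ) : ℂ)
          - η * ((‖F x‖ ^ 2 : ℝ) : ℂ) + ((‖F' x‖ ^ 2 : ℝ) : ℂ)) (Ioi 0) := by
      intro x hx
      have hx0 : (0:ℝ) ≤ x := le_of_lt hx
      have h1 : F x * (starRingEnd ℂ) (F x) = ((‖F x‖ ^ 2 : ℝ) : ℂ) := by
        rw [Complex.mul_conj]
        norm_cast
        rw [Complex.normSq_eq_norm_sq]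
      have h2 : F' x * (starRingEnd ℂ) (F' x) = ((‖F' x‖ ^ 2 : ℝ) : ℂ) := by
        rw [Complex.mul_conj]
        norm_cast
        rw [Complex.normSq_eq_norm_sq]
      have h0 : ((x ^ β * ‖F x‖ ^ 2 : ℝ) : ℂ) = ((x ^ β : ℝ) : ℂ) * ((‖F x‖ ^ 2 : ℝ) : ℂ) := by
        push_cast; ring
      simp only
      rw [hF''eq x hx0, h0]
      linear_combination (Complex.I * ((x ^ β : ℝ) : ℂ) - η) * h1 + h2
    rw [setIntegral_congr_fun measurableSet_Ioi heqfun]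
    have hiQ : Integrable (fun x => Complex.I * ((x ^ β * ‖F x‖ ^ 2 : ℝ) : ℂ))
        (volume.restrict (Ioi 0)) := (hQi.ofReal).const_mul _
    have hiR : Integrable (fun x => η * ((‖F x‖ ^ 2 : ℝ) : ℂ))
        (volume.restrict (Ioi 0)) := (hFi.ofReal).const_mul _
    have hiP : Integrable (fun x => ((‖F' x‖ ^ 2 : ℝ) : ℂ))
        (volume.restrict (Ioi 0)) := hF'i.ofReal
    have hiQR : Integrable (fun x => Complex.I * ((x ^ β * ‖F x‖ ^ 2 : ℝ) : ℂ)
        - η * ((‖F x‖ ^ 2 : ℝ) : ℂ)) (volume.restrict (Ioi 0)) := by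
      exact hiQ.sub hiR
    have e1 : ∫ x in Ioi (0:ℝ), ((x ^ β * ‖F x‖ ^ 2 : ℝ) : ℂ) = ((Q : ℝ) : ℂ) :=
      integral_ofReal
    have e2 : ∫ x in Ioi (0:ℝ), ((‖F x‖ ^ 2 : ℝ) : ℂ) = ((R : ℝ) : ℂ) := integral_ofReal
    have e3 : ∫ x in Ioi (0:ℝ), ((‖F' x‖ ^ 2 : ℝ) : ℂ) = ((P : ℝ) : ℂ) := integral_ofReal
    rw [integral_add hiQR hiP, integral_sub hiQ hiR,
      integral_const_mul, integral_const_mul, e1, e2, e3]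
  have hkey : (starRingEnd ℂ) (F 0) = -(P : ℂ) - Complex.I * (Q : ℂ) + η * (R : ℂ) := by
    have h := I1
    rw [hsplit, hF'0, one_mul] at h
    linear_combination h
  -- norm identity
  have hnormF0 : ‖F 0‖ = ‖(P : ℂ) + Complex.I * (Q : ℂ) - η * (R : ℂ)‖ := by
    rw [← RCLike.norm_conj (F 0), hkey]
    rw [show -(P : ℂ) - Complex.I * (Q : ℂ) + η * (R : ℂ)
      = -((P : ℂ) + Complex.I * (Q : ℂ) - η * (R : ℂ)) by ring, norm_neg]
  set N : ℝ := ‖(P : ℂ) + Complex.I * (Q : ℂ)‖ with hNdef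
  have hN0 : 0 ≤ N := norm_nonneg _
  have hN2 : N ^ 2 = P ^ 2 + Q ^ 2 := by
    rw [hNdef, Complex.sq_norm]
    simp [Complex.normSq_apply]
    ring
  have hηR : ‖η * (R : ℂ)‖ ≤ c / 2 * R := by
    rw [norm_mul, Complex.norm_real, Real.norm_eq_abs, _root_.abs_of_nonneg hR0]
    exact mul_le_mul_of_nonneg_right hη hR0
  have hlow : N - c / 2 * R ≤ ‖F 0‖ := by
    rw [hnormF0]
    have := norm_sub_norm_le ((P : ℂ) + Complex.I * (Q : ℂ)) (η * (R : ℂ))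
    linarith [hηR]
  -- Sobolev bound : ‖F 0‖² ≤ R + P
  have hg2d : ∀ x ∈ Ici (0:ℝ),
      HasDerivWithinAt (fun y => F y * (starRingEnd ℂ) (F y))
        (F' x * (starRingEnd ℂ) (F x) + F x * (starRingEnd ℂ) (F' x)) (Ici 0) x :=
    fun x hx => (hFd x hx).mul ((hFd x hx).star)
  have hg2i : IntegrableOn (fun x => F x * (starRingEnd ℂ) (F x)) (Ioi 0) :=
    aux_mul_conj_integrable hFm hFm hFi hFi
  have hg2'i : IntegrableOn
      (fun x => F' x * (starRingEnd ℂ) (F x) + F x * (starRingEnd ℂ) (F' x)) (Ioi 0) :=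
    (aux_mul_conj_integrable hF'm hFm hF'i hFi).add
      (aux_mul_conj_integrable hFm hF'm hFi hF'i)
  have I2 : ∫ x in Ioi (0:ℝ),
      (F' x * (starRingEnd ℂ) (F x) + F x * (starRingEnd ℂ) (F' x))
      = -(F 0 * (starRingEnd ℂ) (F 0)) :=
    aux_integral_deriv _ _ hg2d hg2i hg2'i
  have hSob : ‖F 0‖ ^ 2 ≤ R + P := by
    have h0 : F 0 * (starRingEnd ℂ) (F 0) = ((‖F 0‖ ^ 2 : ℝ) : ℂ) := by
      rw [Complex.mul_conj]; norm_cast; rw [Complex.normSq_eq_norm_sq]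
    have h1 : ‖F 0‖ ^ 2 = ‖∫ x in Ioi (0:ℝ),
        (F' x * (starRingEnd ℂ) (F x) + F x * (starRingEnd ℂ) (F' x))‖ := by
      rw [I2, norm_neg, h0, Complex.norm_real, Real.norm_eq_abs,
        _root_.abs_of_nonneg (sq_nonneg _)]
    rw [h1]
    calc ‖∫ x in Ioi (0:ℝ),
        (F' x * (starRingEnd ℂ) (F x) + F x * (starRingEnd ℂ) (F' x))‖
        ≤ ∫ x in Ioi (0:ℝ),
          ‖F' x * (starRingEnd ℂ) (F x) + F x * (starRingEnd ℂ) (F' x)‖ :=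
          norm_integral_le_integral_norm _
      _ ≤ ∫ x in Ioi (0:ℝ), (‖F x‖ ^ 2 + ‖F' x‖ ^ 2) := by
          refine integral_mono hg2'i.norm ?_ ?_
          · exact (hFi.add hF'i).congr (ae_of_all _ fun x => by simp)
          · intro x
            simp only
            have h3 : ‖F' x * (starRingEnd ℂ) (F x) + F x * (starRingEnd ℂ) (F' x)‖
                ≤ ‖F' x‖ * ‖F x‖ + ‖F x‖ * ‖F' x‖ := by
              refine (norm_add_le _ _).trans ?_
              rw [norm_mul, norm_mul, RCLike.norm_conj, RCLike.norm_conj]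
            nlinarith [sq_nonneg (‖F x‖ - ‖F' x‖), norm_nonneg (F x), norm_nonneg (F' x)]
      _ = R + P := integral_add hFi hF'i
  -- lower bound for A = P + Q
  have hftcF' : ∀ x : ℝ, 0 ≤ x → ∫ t in (0:ℝ)..x, F'' t = F' x - F' 0 := by
    intro x hx
    refine intervalIntegral.integral_eq_sub_of_hasDeriv_right_of_le hx
      (hF'c.mono Icc_subset_Ici_self)
      (fun t ht => (hF'd t (le_of_lt ht.1)).mono (fun y hy => le_of_lt (ht.1.trans hy)))
      ?_
    have : ContinuousOn F'' (uIcc 0 x) := by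
      rw [uIcc_of_le hx]; exact hF''c.mono Icc_subset_Ici_self
    exact this.intervalIntegrable
  have hA : δ ≤ P + Q := by
    rcases le_or_gt R (1 / (2 * a)) with hcase | hcase
    · -- F' stays ≥ 1/2 near 0
      set m : ℝ := 1 / (2 * a) with hm
      have hm0 : 0 < m := by positivity
      have hm1 : m ≤ 1 := by
        rw [hm, div_le_one (by positivity)]
        linarith
      have hbound : ∀ x ∈ Ioc (0:ℝ) m, (1:ℝ) / 2 ≤ ‖F' x‖ := by
        intro x hx
        have hx0 : (0:ℝ) ≤ x := le_of_lt hx.1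
        have hxm : x ≤ m := hx.2
        have h2 : ‖∫ t in (0:ℝ)..x, F'' t‖ ≤ ∫ t in (0:ℝ)..x, ‖F'' t‖ :=
          intervalIntegral.norm_integral_le_integral_norm hx0
        have hFcont : ContinuousOn F (uIcc 0 x) := by
          rw [uIcc_of_le hx0]; exact hFc.mono Icc_subset_Ici_self
        have hF''cont : ContinuousOn F'' (uIcc 0 x) := by
          rw [uIcc_of_le hx0]; exact hF''c.mono Icc_subset_Ici_self
        have h3 : ∫ t in (0:ℝ)..x, ‖F'' t‖
            ≤ ∫ t in (0:ℝ)..x, a * ((1 + ‖F t‖ ^ 2) / 2) := by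
          have hcont2 : ContinuousOn (fun t : ℝ => a * ((1 + ‖F t‖ ^ 2) / 2)) (uIcc 0 x) :=
            continuousOn_const.mul ((continuousOn_const.add (hFcont.norm.pow 2)).div_const 2)
          refine intervalIntegral.integral_mono_on hx0
            hF''cont.norm.intervalIntegrable hcont2.intervalIntegrable ?_
          · intro t ht
            have ht0 : (0:ℝ) ≤ t := ht.1
            have ht1 : t ≤ 1 := le_trans ht.2 (le_trans hxm hm1)
            have hrp : t ^ β ≤ 1 := Real.rpow_le_one ht0 ht1 hβ
            have hb := hF''norm t ht0
            have hfn : (0:ℝ) ≤ ‖F t‖ := norm_nonneg _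
            have h4 : (t ^ β + c / 2) * ‖F t‖ ≤ a * ‖F t‖ := by
              apply mul_le_mul_of_nonneg_right _ hfn
              rw [ha]; linarith
            have h5 : a * ‖F t‖ ≤ a * ((1 + ‖F t‖ ^ 2) / 2) := by
              apply mul_le_mul_of_nonneg_left _ (le_of_lt ha0)
              nlinarith [sq_nonneg (1 - ‖F t‖)]
            linarith
        have hFcont' : ContinuousOn (fun t : ℝ => ‖F t‖ ^ 2) (uIcc 0 x) := hFcont.norm.pow 2
        have h6 : ∫ t in (0:ℝ)..x, a * ((1 + ‖F t‖ ^ 2) / 2)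
            = a / 2 * (x + ∫ t in (0:ℝ)..x, ‖F t‖ ^ 2) := by
          have hrw : (fun t : ℝ => a * ((1 + ‖F t‖ ^ 2) / 2))
              = fun t : ℝ => a / 2 * (1 + ‖F t‖ ^ 2) := by
            funext t; ring
          rw [hrw, intervalIntegral.integral_const_mul,
            intervalIntegral.integral_add intervalIntegrable_const
              hFcont'.intervalIntegrable, intervalIntegral.integral_const]
          simp only [smul_eq_mul, sub_zero, mul_one]
        have h7 : ∫ t in (0:ℝ)..x, ‖F t‖ ^ 2 ≤ R := by
          rw [intervalIntegral.integral_of_le hx0]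
          refine setIntegral_mono_set hFi ?_ ?_
          · exact (ae_restrict_iff' measurableSet_Ioi).2 (ae_of_all _ fun t _ => sq_nonneg _)
          · exact (Ioc_subset_Ioi_self).eventuallyLE
        have h8 : ‖∫ t in (0:ℝ)..x, F'' t‖ ≤ 1 / 2 := by
          have hxR : x + R ≤ m + m := by linarith
          have ha' : a ≠ 0 := ne_of_gt ha0
          have hma : a * m = 1 / 2 := by rw [hm]; field_simp
          have ham : a / 2 * (m + m) = 1 / 2 := by
            calc a / 2 * (m + m) = a * m := by ring
              _ = 1 / 2 := hma
          have h9 : a / 2 * (x + ∫ t in (0:ℝ)..x, ‖F t‖ ^ 2) ≤ a / 2 * (m + m) := by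
            apply mul_le_mul_of_nonneg_left _ (by positivity)
            linarith
          linarith
        have h10 : F' x = F' 0 + ∫ t in (0:ℝ)..x, F'' t := by
          rw [hftcF' x hx0]; ring
        have h11 : ‖F' 0‖ - ‖∫ t in (0:ℝ)..x, F'' t‖ ≤ ‖F' x‖ := by
          have h12 := norm_sub_norm_le (F' 0) (-(∫ t in (0:ℝ)..x, F'' t))
          rw [norm_neg, sub_neg_eq_add, ← h10] at h12
          exact h12
        rw [hF'0] at h11
        simp only [norm_one] at h11
        linarith
      have hPm : m / 4 ≤ P := by
        have hsub : ∫ t in Ioc (0:ℝ) m, ‖F' t‖ ^ 2 ≤ P := by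
          refine setIntegral_mono_set hF'i ?_ ?_
          · exact (ae_restrict_iff' measurableSet_Ioi).2 (ae_of_all _ fun t _ => sq_nonneg _)
          · exact (Ioc_subset_Ioi_self).eventuallyLE
        have hconst : ∫ t in Ioc (0:ℝ) m, (1/4 : ℝ) ≤ ∫ t in Ioc (0:ℝ) m, ‖F' t‖ ^ 2 := by
          refine setIntegral_mono_on (integrableOn_const (lt_top_iff_ne_top.1 ?_))
            (hF'i.mono_set Ioc_subset_Ioi_self) measurableSet_Ioc ?_
          · rw [Real.volume_Ioc]; exact ENNReal.ofReal_lt_top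
          · intro t ht
            have := hbound t ht
            nlinarith [norm_nonneg (F' t)]
        have hval : ∫ t in Ioc (0:ℝ) m, (1/4 : ℝ) = m / 4 := by
          rw [setIntegral_const, Real.volume_real_Ioc_of_le (by linarith), smul_eq_mul]
          ring
        linarith [hval ▸ hconst]
      calc δ ≤ 1 / (8 * a) := by rw [hδdef]; exact min_le_left _ _
        _ = m / 4 := by rw [hm]; ring
        _ ≤ P := hPm
        _ ≤ P + Q := by linarith
    · calc δ ≤ c / (2 * a) := by rw [hδdef]; exact min_le_right _ _
        _ ≤ c * R := by
            have h1 : 1 / (2 * a) ≤ R := le_of_lt hcase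
            calc c / (2 * a) = c * (1 / (2 * a)) := by ring
              _ ≤ c * R := mul_le_mul_of_nonneg_left h1 (le_of_lt hc)
        _ ≤ P + Q := hcR
  -- combine
  have hAF0 : (P + Q) / 5 ≤ ‖F 0‖ := by
    have h1 : N - (P + Q) / 2 ≤ ‖F 0‖ := by
      have : c / 2 * R ≤ (P + Q) / 2 := by linarith
      linarith
    nlinarith [sq_nonneg (P - Q), mul_nonneg hP0 hQ0, hN2, hN0, hP0, hQ0]
  have hup : ‖F 0‖ ≤ K := by
    have hRle : R ≤ (P + Q) / c := by
      rw [le_div_iff₀ hc]; linarith [hcR]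
    have h2 : ‖F 0‖ ^ 2 ≤ (1 + 1 / c) * (P + Q) := by
      have : R + P ≤ (P + Q) / c + (P + Q) := by linarith
      calc ‖F 0‖ ^ 2 ≤ R + P := hSob
        _ ≤ (P + Q) / c + (P + Q) := this
        _ = (1 + 1 / c) * (P + Q) := by field_simp; ring
    have h3 : P + Q ≤ 5 * ‖F 0‖ := by linarith
    have h4 : ‖F 0‖ ^ 2 ≤ K * ‖F 0‖ := by
      calc ‖F 0‖ ^ 2 ≤ (1 + 1 / c) * (P + Q) := h2
        _ ≤ (1 + 1 / c) * (5 * ‖F 0‖) := by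
            apply mul_le_mul_of_nonneg_left h3 (by positivity)
        _ = K * ‖F 0‖ := by rw [hK]; ring
    nlinarith [norm_nonneg (F 0), hK0]
  constructor
  · have h5 : δ / 5 ≤ ‖F 0‖ := le_trans (by linarith) hAF0
    have h6 : 1 / max K (5 / δ) ≤ 1 / (5 / δ) := by
      apply one_div_le_one_div_of_le (by positivity) (le_max_right _ _)
    have h7 : 1 / (5 / δ) = δ / 5 := by field_simp
    linarith
  · exact le_trans hup (le_max_left _ _)
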